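/- For a 1-dimensional sequence s : -ℕ → R and a polynomial f ∈ R[X], f annihilates s (i.e. f ∘ s = 0 under right-shifting) if and only if the product f·Γ(s), computed in R((X⁻¹)), lies in X·R[X]. -/

import Mathlib

noncomputable section

variable {R : Type*}

/-- Right-shift action on a 1-D sequence indexed by `-ℕ`: index `b : ℕ` encodes `-b`,
so `(f ∘ s)_{-b} = ∑ f_a s_{-b-a}`. -/
def shiftR1 [CommSemiring R] (f : Polynomial R) (s : ℕ → R) : ℕ → R :=
  fun b => ∑ a ∈ Finset.range (f.natDegree + 1), f.coeff a * s (b + a)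

/-- The generating function `Γ(s) = ∑_{c ≤ 0} s_c X^c` as coefficient function on `ℤ`. -/
def Gamma1 [Zero R] (s : ℕ → R) : ℤ → R :=
  fun c => if c ≤ 0 then s (-c).toNat else 0

/-- Coefficient function of the product `f · G` in `R((X⁻¹))`. -/
def polyMul1 [CommSemiring R] (f : Polynomial R) (G : ℤ → R) : ℤ → R :=
  fun c => ∑ a ∈ Finset.range (f.natDegree + 1), f.coeff a * G (c - (a : ℤ))

/-- Coefficient function on `ℤ` of a polynomial. -/
def toZfun [Semiring R] (p : Polynomial R) : ℤ → R :=
  fun c => if 0 ≤ c then p.coeff c.toNat else 0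

/-- The border polynomial `β₀(f,s) = (f·Γ(s)) | [1, deg f]`. -/
def beta0Poly1 [CommSemiring R] (f : Polynomial R) (s : ℕ → R) : Polynomial R :=
  ∑ c ∈ Finset.Icc 1 f.natDegree, Polynomial.monomial c (polyMul1 f (Gamma1 s) (c : ℤ))

/-- `β₀(f,s) / X`. -/
def beta0DivX1 [CommSemiring R] (f : Polynomial R) (s : ℕ → R) : Polynomial R :=
  ∑ c ∈ Finset.Icc 1 f.natDegree, Polynomial.monomial (c - 1) (polyMul1 f (Gamma1 s) (c : ℤ))

lemma polyMul1_neg [CommRing R] (f : Polynomial R) (s : ℕ → R) (b : ℕ) :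
    polyMul1 f (Gamma1 s) (-(b : ℤ)) = shiftR1 f s b := by
  unfold polyMul1 Gamma1 shiftR1
  refine Finset.sum_congr rfl fun a _ => ?_
  have h : -(b : ℤ) - a ≤ 0 := by omega
  rw [if_pos h]
  have h2 : (-(-(b : ℤ) - a)).toNat = b + a := by omega
  rw [h2]

lemma polyMul1_pos [CommRing R] (f : Polynomial R) (s : ℕ → R) (c : ℤ)
    (hc : (f.natDegree : ℤ) < c) : polyMul1 f (Gamma1 s) c = 0 := by
  unfold polyMul1 Gamma1
  refine Finset.sum_eq_zero fun a ha => ?_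
  simp only [Finset.mem_range] at ha
  rw [if_neg (by omega), mul_zero]

lemma beta0DivX1_coeff [CommRing R] (f : Polynomial R) (s : ℕ → R) (n : ℕ) :
    (beta0DivX1 f s).coeff n =
      if n + 1 ∈ Finset.Icc 1 f.natDegree then polyMul1 f (Gamma1 s) ((n : ℤ) + 1) else 0 := by
  unfold beta0DivX1
  rw [Polynomial.finset_sum_coeff]
  rw [Finset.sum_eq_single (n + 1)]
  · rw [Polynomial.coeff_monomial, if_pos (by omega)]
    split <;> rename_i h
    · norm_cast
    · simp only [Finset.mem_Icc, not_and, not_le] at h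
      exact polyMul1_pos f s _ (by omega)
  · intro c hc hne
    simp only [Finset.mem_Icc] at hc
    rw [Polynomial.coeff_monomial, if_neg (by omega)]
  · intro h
    simp only [Finset.mem_Icc, not_and, not_le] at h
    rw [Polynomial.coeff_monomial, if_pos (by omega)]
    exact polyMul1_pos f s _ (by omega)

/-- `f ∘ s = 0` iff `f·Γ(s) ∈ X·R[X]` in `R((X⁻¹))`. -/
theorem stmt3 [CommRing R] (s : ℕ → R) (f : Polynomial R) :
    shiftR1 f s = 0 ↔
      ∃ g : Polynomial R, ∀ c : ℤ, polyMul1 f (Gamma1 s) c = toZfun g (c - 1) := by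
  constructor
  · intro h
    refine ⟨beta0DivX1 f s, fun c => ?_⟩
    rcases le_or_gt c 0 with hc | hc
    · have : polyMul1 f (Gamma1 s) c = shiftR1 f s (-c).toNat := by
        rw [← polyMul1_neg]
        congr 1
        omega
      rw [this, h]
      simp [toZfun, show ¬ (0 : ℤ) ≤ c - 1 by omega]
      omega
    · have hc1 : (0 : ℤ) ≤ c - 1 := by omega
      rw [toZfun, if_pos hc1, beta0DivX1_coeff]
      have hcn : ((c - 1).toNat : ℤ) = c - 1 := by omega
      split <;> rename_i h2
      · congr 1
        omega
      · simp only [Finset.mem_Icc] at h2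
        rw [polyMul1_pos f s c (by omega)]
  · rintro ⟨g, hg⟩
    funext b
    have := hg (-(b : ℤ))
    rw [polyMul1_neg] at this
    rw [this, toZfun, if_neg (by omega)]
    rfl
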